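/- Let ℒ = {l₁, l₂, …, l_s} be a set of s nonnegative integers and K = {k₁, k₂, …, k_r} be a set of integers satisfying kᵢ > s − r for every i. Suppose 𝒜 = {A₁, A₂, …, A_m} is a family of m pairwise distinct subsets of [n] such that |Aᵢ| ∈ K for every 1 ≤ i ≤ m and |Aᵢ ∩ Aⱼ| ∈ ℒ for every pair i ≠ j. Then m ≤ C(n, s) + C(n, s−1) + … + C(n, s−r+1), where terms C(n, i) with i < 0 are interpreted as 0. -/

import Mathlib

open Finset

namespace ABS

variable {n : ℕ}

noncomputable def mono (T : Finset (Fin n)) : Finset (Fin n) → ℝ :=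
  fun S => if T ⊆ S then 1 else 0

noncomputable def M (n d : ℕ) : Submodule ℝ (Finset (Fin n) → ℝ) :=
  Submodule.span ℝ (mono '' {T : Finset (Fin n) | T.card ≤ d})

lemma mono_mul (T T' : Finset (Fin n)) : mono T * mono T' = mono (T ∪ T') := by
  funext S
  simp only [mono, Pi.mul_apply, union_subset_iff]
  by_cases h1 : T ⊆ S <;> by_cases h2 : T' ⊆ S <;> simp [h1, h2]

lemma mono_empty : (mono (∅ : Finset (Fin n))) = 1 := by
  funext S; simp [mono]

lemma mono_mem (T : Finset (Fin n)) {d : ℕ} (h : T.card ≤ d) : mono T ∈ M n d :=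
  Submodule.subset_span ⟨T, h, rfl⟩

lemma M_mono {d d' : ℕ} (h : d ≤ d') : M n d ≤ M n d' :=
  Submodule.span_mono (Set.image_mono fun T hT => le_trans hT h)

lemma smul_mul' (c : ℝ) (y v : Finset (Fin n) → ℝ) : (c • y) * v = c • (y * v) := by
  funext S; simp [mul_assoc]

lemma mul_smul' (c : ℝ) (y v : Finset (Fin n) → ℝ) : y * (c • v) = c • (y * v) := by
  funext S; simp; ring

lemma mul_mem_M {a b : ℕ} {u v : Finset (Fin n) → ℝ}
    (hu : u ∈ M n a) (hv : v ∈ M n b) : u * v ∈ M n (a + b) := by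
  induction hu using Submodule.span_induction with
  | mem x hx =>
    obtain ⟨T, hT, rfl⟩ := hx
    induction hv using Submodule.span_induction with
    | mem y hy =>
      obtain ⟨T', hT', rfl⟩ := hy
      rw [mono_mul]
      exact mono_mem _ (le_trans (card_union_le _ _) (add_le_add hT hT'))
    | zero => simpa using (M n (a+b)).zero_mem
    | add y z _ _ hy hz => rw [mul_add]; exact (M n (a+b)).add_mem hy hz
    | smul c y _ hy => rw [mul_smul']; exact (M n (a+b)).smul_mem c hy
  | zero => simpa using (M n (a+b)).zero_mem
  | add y z _ _ hy hz => rw [add_mul]; exact (M n (a+b)).add_mem hy hz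
  | smul c y _ hy => rw [smul_mul']; exact (M n (a+b)).smul_mem c hy

lemma inter_card_fun_mem (A : Finset (Fin n)) (c : ℝ) :
    (fun S => ((A ∩ S).card : ℝ) - c) ∈ M n 1 := by
  have key : (fun S => ((A ∩ S).card : ℝ) - c)
      = (∑ j ∈ A, mono {j}) - c • mono (∅ : Finset (Fin n)) := by
    funext S
    have : (A ∩ S).card = ∑ j ∈ A, if j ∈ S then 1 else 0 := by
      rw [← Finset.card_filter, Finset.filter_mem_eq_inter]
    have hcast : ((A ∩ S).card : ℝ) = ∑ j ∈ A, if j ∈ S then (1:ℝ) else 0 := by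
      rw [this]; push_cast; rfl
    simp only [Pi.sub_apply, Finset.sum_apply, Pi.smul_apply, mono,
      Finset.empty_subset, if_true, smul_eq_mul, mul_one,
      Finset.singleton_subset_iff, hcast]
  rw [key]
  exact (M n 1).sub_mem
    (Submodule.sum_mem _ fun j _ => mono_mem {j} (by simp))
    ((M n 1).smul_mem c (M_mono (Nat.zero_le 1) (mono_mem ∅ (by simp))))

lemma prod_linear_mem {ι : Type*} [DecidableEq ι] (t : Finset ι) (v : ι → Finset (Fin n) → ℝ)
    (hv : ∀ i ∈ t, v i ∈ M n 1) : (∏ i ∈ t, v i) ∈ M n t.card := by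
  induction t using Finset.cons_induction with
  | empty =>
    rw [Finset.prod_empty, ← mono_empty]
    exact mono_mem _ (by simp)
  | cons a t ha ih =>
    rw [Finset.prod_cons, Finset.card_cons]
    have h := mul_mem_M (hv a (Finset.mem_cons_self _ _))
      (ih fun i hi => hv i (Finset.mem_cons_of_mem hi))
    rwa [add_comm] at h

lemma count_card_le (n t : ℕ) :
    ((Finset.univ : Finset (Finset (Fin n))).filter (fun T => T.card ≤ t)).card
      = ∑ j ∈ Finset.Icc 0 t, n.choose j := by
  classical
  have h : (Finset.univ.filter (fun T : Finset (Fin n) => T.card ≤ t))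
      = (Finset.Icc 0 t).biUnion (fun j => Finset.powersetCard j Finset.univ) := by
    ext T
    simp only [Finset.mem_filter, Finset.mem_univ, true_and, Finset.mem_biUnion,
      Finset.mem_Icc, Finset.mem_powersetCard, Finset.subset_univ]
    constructor
    · intro hT; exact ⟨T.card, ⟨Nat.zero_le _, hT⟩, rfl⟩
    · rintro ⟨j, ⟨-, hj⟩, rfl⟩; exact hj
  rw [h, Finset.card_biUnion]
  · refine Finset.sum_congr rfl fun j _ => ?_
    rw [Finset.card_powersetCard, Finset.card_univ, Fintype.card_fin]
  · intro x _ y _ hxy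
    simp only [Function.onFun]
    rw [Finset.disjoint_left]
    intro T hT hT'
    rw [Finset.mem_powersetCard] at hT hT'
    exact hxy (hT.2 ▸ hT'.2 ▸ rfl)

end ABS

open ABS in
set_option maxHeartbeats 1000000 in
theorem stmt_16 (n s r m : ℕ) (L : Finset ℕ) (hL : L.card = s)
    (K : Finset ℤ) (hKcard : K.card = r)
    (hKgt : ∀ x ∈ K, x > (s : ℤ) - (r : ℤ))
    (A : Fin m → Finset (Fin n)) (hA : Function.Injective A)
    (hAK : ∀ i, ((A i).card : ℤ) ∈ K)
    (hAL : ∀ i j, i ≠ j → (A i ∩ A j).card ∈ L) :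
    m ≤ ∑ j ∈ Finset.Icc (s + 1 - r) s, n.choose j := by
  classical
  -- the polynomial-functions
  let f : Fin m → Finset (Fin n) → ℝ :=
    fun i => ∏ l ∈ L.filter (fun l => l < (A i).card),
      (fun S => ((A i ∩ S).card : ℝ) - (l : ℝ))
  let P : Finset (Fin n) → Prop := fun D => (D.card : ℤ) ≤ (s : ℤ) - (r : ℤ)
  let Q : Finset (Fin n) → ℝ := ∏ k ∈ K, (fun S : Finset (Fin n) => ((S.card : ℝ) - (k : ℝ)))
  let g : Finset (Fin n) → Finset (Fin n) → ℝ := fun D => ABS.mono D * Q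
  -- membership in M n s
  have hfmem : ∀ i, f i ∈ M n s := by
    intro i
    have h1 := prod_linear_mem (L.filter (fun l => l < (A i).card))
      (fun l => fun S => ((A i ∩ S).card : ℝ) - (l : ℝ))
      (fun l _ => inter_card_fun_mem (A i) (l : ℝ))
    exact M_mono (le_trans (Finset.card_filter_le _ _) hL.le) h1
  have hQmem : Q ∈ M n r := by
    have h1 := prod_linear_mem K
      (fun k => fun S : Finset (Fin n) => ((S.card : ℝ) - (k : ℝ)))
      (fun k _ => by
        have := inter_card_fun_mem (Finset.univ : Finset (Fin n)) (k : ℝ)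
        simpa [Finset.univ_inter] using this)
    rwa [hKcard] at h1
  have hgmem : ∀ D : Finset (Fin n), P D → g D ∈ M n s := by
    intro D hD
    have h1 := mul_mem_M (mono_mem D le_rfl) hQmem
    refine M_mono ?_ h1
    have : (D.card : ℤ) + (r : ℤ) ≤ (s : ℤ) := by
      have := hD; omega
    omega
  -- evaluation formulas
  have hfapp : ∀ i S, f i S
      = ∏ l ∈ L.filter (fun l => l < (A i).card), (((A i ∩ S).card : ℝ) - (l : ℝ)) := by
    intro i S
    simp only [f, Finset.prod_apply]
  have hgapp : ∀ D S, g D S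
      = (if D ⊆ S then (1:ℝ) else 0) * ∏ k ∈ K, (((S.card : ℝ) - (k : ℝ))) := by
    intro D S
    simp only [g, Q, Pi.mul_apply, mono, Finset.prod_apply]
  -- the combined family
  let F : (Fin m ⊕ {D : Finset (Fin n) // P D}) → (Finset (Fin n) → ℝ) :=
    Sum.elim f (fun D => g D.1)
  have hind : LinearIndependent ℝ F := by
    rw [Fintype.linearIndependent_iff]
    intro c hc
    have hev : ∀ S : Finset (Fin n),
        (∑ i : Fin m, c (Sum.inl i) * f i S)
          + (∑ D : {D : Finset (Fin n) // P D}, c (Sum.inr D) * g D.1 S) = 0 := by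
      intro S
      have h0 := congrFun hc S
      rw [Fintype.sum_sum_type] at h0
      simpa only [Pi.add_apply, Finset.sum_apply, Pi.smul_apply, smul_eq_mul,
        Sum.elim_inl, Sum.elim_inr, Pi.zero_apply, F] using h0
    -- g vanishes at every A i
    have hgA : ∀ (D : Finset (Fin n)) (i : Fin m), g D (A i) = 0 := by
      intro D i
      rw [hgapp]
      have hz : ∏ k ∈ K, (((A i).card : ℝ) - (k : ℝ)) = 0 :=
        Finset.prod_eq_zero (hAK i) (by push_cast; ring)
      rw [hz, mul_zero]
    -- f j vanishes at A i for j ≠ i with |A i| ≥ |A j| ... careful direction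
    have hfA0 : ∀ i j : Fin m, j ≠ i → (A i).card ≤ (A j).card → f j (A i) = 0 := by
      intro i j hne hle
      rw [hfapp]
      refine Finset.prod_eq_zero (i := (A j ∩ A i).card) ?_ ?_
      · rw [Finset.mem_filter]
        refine ⟨hAL j i hne, ?_⟩
        rcases lt_or_eq_of_le (Finset.card_le_card (Finset.inter_subset_left : A j ∩ A i ⊆ A j))
          with h | h
        · exact h
        · exfalso
          have hsub : A j ⊆ A i := by
            have h2 := Finset.eq_of_subset_of_card_le
              Finset.inter_subset_left (le_of_eq h.symm)
            exact Finset.inter_eq_left.mp h2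
          exact hne (hA (Finset.eq_of_subset_of_card_le hsub hle))
      · exact sub_self _
    have hfAi : ∀ i : Fin m, f i (A i) ≠ 0 := by
      intro i
      rw [hfapp]
      rw [Finset.prod_ne_zero_iff]
      intro l hl
      rw [Finset.mem_filter] at hl
      have hlt : (l : ℝ) < ((A i ∩ A i).card : ℝ) := by
        rw [Finset.inter_self]; exact_mod_cast hl.2
      intro hcon
      rw [sub_eq_zero] at hcon
      exact absurd hcon.symm (ne_of_lt hlt)
    -- Step 1: all inl coefficients vanish
    have step1 : ∀ i : Fin m, c (Sum.inl i) = 0 := by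
      have key : ∀ N : ℕ, ∀ i : Fin m, (A i).card = N → c (Sum.inl i) = 0 := by
        intro N
        induction N using Nat.strong_induction_on with
        | _ N IH =>
          intro i hiN
          have hev' := hev (A i)
          have hsum2 : (∑ D : {D : Finset (Fin n) // P D}, c (Sum.inr D) * g D.1 (A i)) = 0 :=
            Finset.sum_eq_zero fun D _ => by rw [hgA D.1 i, mul_zero]
          rw [hsum2, add_zero] at hev'
          have hsum1 : (∑ j : Fin m, c (Sum.inl j) * f j (A i)) = c (Sum.inl i) * f i (A i) := by
            apply Finset.sum_eq_single
            · intro j _ hji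
              rcases lt_or_ge (A j).card (A i).card with hlt | hge
              · rw [IH (A j).card (hiN ▸ hlt) j rfl, zero_mul]
              · rw [hfA0 i j hji hge, mul_zero]
            · intro h; exact absurd (Finset.mem_univ i) h
          rw [hsum1] at hev'
          exact (mul_eq_zero.mp hev').resolve_right (hfAi i)
      exact fun i => key (A i).card i rfl
    -- Step 2: all inr coefficients vanish
    have hQne : ∀ D : Finset (Fin n), P D → (∏ k ∈ K, ((D.card : ℝ) - (k : ℝ))) ≠ 0 := by
      intro D hD
      rw [Finset.prod_ne_zero_iff]
      intro k hk hcon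
      rw [sub_eq_zero] at hcon
      have h1 : (D.card : ℤ) < k := lt_of_le_of_lt hD (hKgt k hk)
      have h2 : ((D.card : ℤ) : ℝ) < (k : ℝ) := by exact_mod_cast h1
      rw [show (((D.card : ℤ)) : ℝ) = ((D.card : ℕ) : ℝ) by push_cast; ring] at h2
      exact absurd hcon (ne_of_lt h2)
    have step2 : ∀ D : {D : Finset (Fin n) // P D}, c (Sum.inr D) = 0 := by
      have key : ∀ N : ℕ, ∀ D : {D : Finset (Fin n) // P D}, D.1.card = N → c (Sum.inr D) = 0 := by
        intro N
        induction N using Nat.strong_induction_on with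
        | _ N IH =>
          intro D hDN
          have hev' := hev D.1
          have hsum1 : (∑ j : Fin m, c (Sum.inl j) * f j D.1) = 0 :=
            Finset.sum_eq_zero fun j _ => by rw [step1 j, zero_mul]
          rw [hsum1, zero_add] at hev'
          have hsum2 : (∑ D' : {D : Finset (Fin n) // P D}, c (Sum.inr D') * g D'.1 D.1)
              = c (Sum.inr D) * g D.1 D.1 := by
            apply Finset.sum_eq_single
            · intro D' _ hne
              by_cases hsub : D'.1 ⊆ D.1
              · have hneq : D'.1 ≠ D.1 := fun h => hne (Subtype.ext h)
                have hlt : D'.1.card < D.1.card :=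
                  Finset.card_lt_card (lt_of_le_of_ne hsub hneq)
                rw [IH D'.1.card (hDN ▸ hlt) D' rfl, zero_mul]
              · rw [hgapp, if_neg hsub, zero_mul, mul_zero]
            · intro h; exact absurd (Finset.mem_univ D) h
          rw [hsum2] at hev'
          have hgd : g D.1 D.1 = (∏ k ∈ K, ((D.1.card : ℝ) - (k : ℝ))) := by
            rw [hgapp, if_pos (Finset.Subset.refl D.1), one_mul]
          rw [hgd] at hev'
          exact (mul_eq_zero.mp hev').resolve_right (hQne D.1 D.2)
      exact fun D => key D.1.card D rfl
    intro x
    cases x with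
    | inl i => exact step1 i
    | inr D => exact step2 D
  -- dimension bound
  have hFmem : ∀ x, F x ∈ M n s := by
    intro x
    cases x with
    | inl i => exact hfmem i
    | inr D => exact hgmem D.1 D.2
  let F' : (Fin m ⊕ {D : Finset (Fin n) // P D}) → M n s := fun x => ⟨F x, hFmem x⟩
  have hind' : LinearIndependent ℝ F' :=
    LinearIndependent.of_comp (M n s).subtype hind
  let B : Finset (Finset (Fin n) → ℝ) :=
    (Finset.univ.filter (fun T : Finset (Fin n) => T.card ≤ s)).image ABS.mono
  have hset : ABS.mono '' {T : Finset (Fin n) | T.card ≤ s}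
      = ((B : Set (Finset (Fin n) → ℝ))) := by
    unfold B
    rw [Finset.coe_image, Finset.coe_filter]
    congr 1
    ext T
    simp
  have hMspan : M n s = Submodule.span ℝ (B : Set (Finset (Fin n) → ℝ)) :=
    congrArg (Submodule.span ℝ) hset
  have hcard1 : Fintype.card (Fin m ⊕ {D : Finset (Fin n) // P D})
      ≤ Module.finrank ℝ (M n s) :=
    hind'.fintype_card_le_finrank
  have hcard2 : Module.finrank ℝ (M n s) ≤ B.card := by
    rw [hMspan]
    refine le_trans (finrank_span_le_card (B : Set (Finset (Fin n) → ℝ))) ?_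
    simp
  have hcard3 : B.card ≤ ((Finset.univ : Finset (Finset (Fin n))).filter
      (fun T => T.card ≤ s)).card := Finset.card_image_le
  have hmain : m + Fintype.card {D : Finset (Fin n) // P D} ≤ ∑ j ∈ Finset.Icc 0 s, n.choose j := by
    have h4 := le_trans hcard1 (le_trans hcard2 hcard3)
    rw [Fintype.card_sum, Fintype.card_fin, count_card_le n s] at h4
    exact h4
  -- counting the subtype
  have hsubcard : Fintype.card {D : Finset (Fin n) // P D}
      = ((Finset.univ : Finset (Finset (Fin n))).filter P).card := Fintype.card_subtype _
  rcases le_or_gt r s with hrs | hrs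
  · -- r ≤ s
    have hPiff : ∀ D : Finset (Fin n), P D ↔ D.card ≤ s - r := by
      intro D; unfold P; omega
    have hfilter : (Finset.univ : Finset (Finset (Fin n))).filter P
        = Finset.univ.filter (fun T : Finset (Fin n) => T.card ≤ s - r) := by
      apply Finset.filter_congr; intro T _; simp [hPiff]
    have hcnt : Fintype.card {D : Finset (Fin n) // P D} = ∑ j ∈ Finset.Icc 0 (s - r), n.choose j := by
      rw [hsubcard, hfilter, count_card_le]
    have hsplit : ∑ j ∈ Finset.Icc 0 s, n.choose j
        = (∑ j ∈ Finset.Icc 0 (s - r), n.choose j) + ∑ j ∈ Finset.Icc (s + 1 - r) s, n.choose j := by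
      rcases Nat.eq_zero_or_pos r with hr0 | hr0
      · subst hr0
        simp [Finset.Icc_eq_empty_of_lt (show s < s + 1 - 0 by omega)]
      · rw [← Finset.sum_union]
        · congr 1
          ext x
          simp only [Finset.mem_union, Finset.mem_Icc]
          omega
        · rw [Finset.disjoint_left]
          intro a ha ha'
          rw [Finset.mem_Icc] at ha ha'
          omega
    rw [hcnt] at hmain
    omega
  · -- r > s
    have hfilter : (Finset.univ : Finset (Finset (Fin n))).filter P = ∅ := by
      rw [Finset.filter_eq_empty_iff]
      intro T _
      unfold P
      omega
    have hcnt : Fintype.card {D : Finset (Fin n) // P D} = 0 := by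
      rw [hsubcard, hfilter, Finset.card_empty]
    rw [hcnt, add_zero] at hmain
    have : s + 1 - r = 0 := by omega
    rw [this]
    exact hmain
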